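/- For Ω in the Siegel upper half-space H_g and any m₁, m₂ ∈ ℤ^g, the Riemann theta function ϑ(Ω,z) = Σ_{m ∈ ℤ^g} exp(πi(mΩmᵀ + 2mzᵀ)) satisfies the quasi-periodicity relation ϑ(Ω, z + m₁ + m₂Ω) = exp(-πi(m₂Ω m₂ᵀ + 2 m₂ zᵀ)) · ϑ(Ω, z). -/

import Mathlib

open scoped Matrix

/-- The Riemann theta function `ϑ(Ω,z) = Σ_{m ∈ ℤ^g} exp(πi(mΩmᵀ + 2mzᵀ))`. -/
noncomputable def riemannTheta {g : ℕ} (Ω : Matrix (Fin g) (Fin g) ℂ)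
    (z : Fin g → ℂ) : ℂ :=
  ∑' m : Fin g → ℤ,
    Complex.exp (Real.pi * Complex.I *
      (dotProduct (fun i => (m i : ℂ)) (Ω.mulVec fun i => (m i : ℂ)) +
        2 * dotProduct (fun i => (m i : ℂ)) z))

/-- Quasi-periodicity of the Riemann theta function: for `Ω` in the Siegel upper
half-space and `m₁, m₂ ∈ ℤ^g`,
`ϑ(Ω, z + m₁ + m₂Ω) = exp(-πi(m₂Ω m₂ᵀ + 2 m₂ zᵀ)) · ϑ(Ω, z)`. -/
theorem riemannTheta_quasi_periodic {g : ℕ} (Ω : Matrix (Fin g) (Fin g) ℂ)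
    (hsymm : Ω.IsSymm) (hpos : (Ω.map Complex.im).PosDef)
    (m₁ m₂ : Fin g → ℤ) (z : Fin g → ℂ) :
    riemannTheta Ω
        (fun i => z i + (m₁ i : ℂ) + Matrix.vecMul (fun j => (m₂ j : ℂ)) Ω i) =
      Complex.exp (-(Real.pi * Complex.I) *
          (dotProduct (fun i => (m₂ i : ℂ))
              (Ω.mulVec fun i => (m₂ i : ℂ)) +
            2 * dotProduct (fun i => (m₂ i : ℂ)) z)) *
        riemannTheta Ω z := by
  classical
  set C : ℂ := Complex.exp (-(Real.pi * Complex.I) *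
      (dotProduct (fun i => (m₂ i : ℂ)) (Ω.mulVec fun i => (m₂ i : ℂ)) +
        2 * dotProduct (fun i => (m₂ i : ℂ)) z)) with hC
  set f : (Fin g → ℤ) → ℂ := fun m =>
    Complex.exp (Real.pi * Complex.I *
      (dotProduct (fun i => (m i : ℂ)) (Ω.mulVec fun i => (m i : ℂ)) +
        2 * dotProduct (fun i => (m i : ℂ)) z)) with hf
  have hswap : ∀ x y : Fin g → ℂ,
      dotProduct x (Ω.mulVec y) = dotProduct y (Ω.mulVec x) := by
    intro x y
    rw [Matrix.dotProduct_mulVec, ← Matrix.mulVec_transpose, hsymm.eq,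
      dotProduct_comm]
  have hvm : Matrix.vecMul (fun j => (m₂ j : ℂ)) Ω
      = Ω.mulVec (fun j => (m₂ j : ℂ)) := by
    rw [← Matrix.mulVec_transpose, hsymm.eq]
  have key : ∀ m : Fin g → ℤ,
      Complex.exp (Real.pi * Complex.I *
        (dotProduct (fun i => (m i : ℂ)) (Ω.mulVec fun i => (m i : ℂ)) +
          2 * dotProduct (fun i => (m i : ℂ))
            (fun i => z i + (m₁ i : ℂ) +
              Matrix.vecMul (fun j => (m₂ j : ℂ)) Ω i)))
      = C * f (m + m₂) := by
    intro m
    have hN : (fun i => (((m + m₂) i : ℤ) : ℂ)) =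
        (fun i => (m i : ℂ)) + (fun i => (m₂ i : ℂ)) := by
      funext i; push_cast [Pi.add_apply]; ring
    have hw : (fun i => z i + (m₁ i : ℂ) +
        Matrix.vecMul (fun j => (m₂ j : ℂ)) Ω i) =
        z + (fun i => (m₁ i : ℂ)) + Ω.mulVec (fun j => (m₂ j : ℂ)) := by
      funext i; simp [hvm, Pi.add_apply]
    set Mm : Fin g → ℂ := fun i => (m i : ℂ)
    set M1 : Fin g → ℂ := fun i => (m₁ i : ℂ)
    set M2 : Fin g → ℂ := fun i => (m₂ i : ℂ)
    have hQ : dotProduct Mm (Ω.mulVec M2)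
        = dotProduct M2 (Ω.mulVec Mm) := hswap Mm M2
    have hP : dotProduct Mm M1 = ((∑ i, m i * m₁ i : ℤ) : ℂ) := by
      simp [Mm, M1, dotProduct]
    have hexp : ∀ (k : ℤ) (a b : ℂ), a = (k : ℂ) * (2 * Real.pi * Complex.I) + b →
        Complex.exp a = Complex.exp b := by
      intro k a b h
      rw [h, Complex.exp_add, Complex.exp_int_mul_two_pi_mul_I, one_mul]
    rw [hf]
    simp only [hN, hw, dotProduct_add, add_dotProduct,
      Matrix.mulVec_add]
    rw [hC, ← Complex.exp_add]
    apply hexp (∑ i, m i * m₁ i)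
    rw [← hP, hQ]
    ring
  simp only [riemannTheta]
  calc (∑' m : Fin g → ℤ, Complex.exp (Real.pi * Complex.I *
        (dotProduct (fun i => (m i : ℂ)) (Ω.mulVec fun i => (m i : ℂ)) +
          2 * dotProduct (fun i => (m i : ℂ))
            (fun i => z i + (m₁ i : ℂ) +
              Matrix.vecMul (fun j => (m₂ j : ℂ)) Ω i))))
      = ∑' m : Fin g → ℤ, C * f (m + m₂) := tsum_congr key
    _ = C * ∑' m : Fin g → ℤ, f (m + m₂) := tsum_mul_left
    _ = C * ∑' m : Fin g → ℤ, f m := by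
        rw [show (∑' m : Fin g → ℤ, f (m + m₂)) = ∑' m : Fin g → ℤ, f m from
          (Equiv.addRight m₂).tsum_eq f]
    _ = _ := rfl
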